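/- For every P ≥ 2 and every integer n > 2, β_P(n) = ∏_{p ≤ P} β_{(p)}(n), the product running over primes p ≤ P. -/

import Mathlib

open Filter Finset
open scoped Classical Topology

noncomputable section

/-- `d` is a positive non-square discriminant. -/
def IsDisc (d : ℕ) : Prop := 0 < d ∧ (d % 4 = 0 ∨ d % 4 = 1) ∧ ¬ IsSquare d

/-- The value of `χ_d` at a prime `p`. -/
def chiP (d p : ℕ) : ℤ :=
  if p = 2 then (if d % 8 = 1 then 1 else if d % 8 = 5 then -1 else 0)
  else if p ∣ d then 0
  else if ∃ x : ZMod p, x ^ 2 = (d : ZMod p) then 1 else -1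

/-- The completely multiplicative function `χ_d` (on the positive integers). -/
def chiFn (d m : ℕ) : ℤ := if m = 0 then 0 else m.factorization.prod fun p k => chiP d p ^ k

/-- `L(1, χ_d)`, defined as the limit of the partial sums `Σ_{1 ≤ n ≤ N} χ_d(n)/n`. -/
def Lval (d : ℕ) : ℝ := limUnder atTop fun N : ℕ => ∑ n ∈ Finset.Icc 1 N, (chiFn d n : ℝ) / n

/-- `β(n) = Σ_{d,v ≥ 1 : d v² = n² - 4} L(1,χ_d)/v` for `n > 2`, and `0` for `n ≤ 2`. -/
def betaFn (n : ℕ) : ℝ :=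
  if 2 < n then
    ∑ᶠ dv ∈ {dv : ℕ × ℕ | IsDisc dv.1 ∧ 0 < dv.2 ∧ dv.1 * dv.2 ^ 2 = n ^ 2 - 4},
      Lval dv.1 / dv.2
  else 0

/-- The primes `p` with `p ≤ P`. -/
def primesLe (P : ℝ) : Finset ℕ := (Finset.range (⌊P⌋₊ + 1)).filter Nat.Prime

/-- `β_P(n)` for `n > 2`, and `0` for `n ≤ 2`. -/
def betaPFn (P : ℝ) (n : ℕ) : ℝ :=
  if 2 < n then
    ∑ᶠ dv ∈ {dv : ℕ × ℕ | IsDisc dv.1 ∧ 0 < dv.2 ∧ dv.1 * dv.2 ^ 2 = n ^ 2 - 4 ∧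
        ∀ p : ℕ, p.Prime → p ∣ dv.2 → (p : ℝ) ≤ P},
      (1 / dv.2 : ℝ) * ∏ p ∈ primesLe P, (1 - (chiFn dv.1 p : ℝ) / p)⁻¹
  else 0

/-- The condition `I_{p^b}(n) = 1`: `p^{2b} ∣ n² - 4` and, in case `p = 2`,
`(n²-4)·2^{-2b} ≡ 0 or 1 (mod 4)`. -/
def Icond (p b n : ℕ) : Prop :=
  p ^ (2 * b) ∣ n ^ 2 - 4 ∧
    (p = 2 → (n ^ 2 - 4) / 2 ^ (2 * b) % 4 = 0 ∨ (n ^ 2 - 4) / 2 ^ (2 * b) % 4 = 1)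

/-- `β_{(p)}(n) = Σ_{b ≥ 0} p^{-b} (1 - χ_{(n²-4)p^{-2b}}(p)/p)⁻¹ I_{p^b}(n)` for `n > 2`. -/
def betaLoc (p n : ℕ) : ℝ :=
  if 2 < n then
    ∑' b : ℕ, if Icond p b n then
      (1 / (p : ℝ) ^ b) * (1 - (chiFn ((n ^ 2 - 4) / p ^ (2 * b)) p : ℝ) / p)⁻¹ else 0
  else 0

/-! ### Auxiliary lemmas -/

lemma chiFn_prime (d p : ℕ) (hp : p.Prime) : chiFn d p = chiP d p := by
  rw [chiFn, if_neg hp.ne_zero, hp.factorization]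
  simp

lemma chiP_vals (d p : ℕ) : chiP d p = 1 ∨ chiP d p = 0 ∨ chiP d p = -1 := by
  unfold chiP; split_ifs <;> tauto

lemma chi_factor_pos (d p : ℕ) (hp : p.Prime) : 0 < 1 - (chiFn d p : ℝ) / p := by
  have hp2 : (2:ℝ) ≤ p := by exact_mod_cast hp.two_le
  have hp0 : (0:ℝ) < p := by linarith
  rw [chiFn_prime d p hp]
  rcases chiP_vals d p with h | h | h <;> rw [h] <;> push_cast
  · rw [sub_pos, div_lt_one hp0]; linarith
  · norm_num
  · rw [neg_div, sub_neg_eq_add]; positivity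

lemma odd_sq_mod8 (m : ℕ) (hm : m % 2 = 1) : m ^ 2 % 8 = 1 := by
  obtain ⟨k, hk⟩ : ∃ k, m = 2 * k + 1 := ⟨m / 2, by omega⟩
  subst hk
  have h : (2 * k + 1) ^ 2 = 4 * (k * (k + 1)) + 1 := by ring
  obtain ⟨t, ht⟩ := Nat.even_mul_succ_self k
  omega

lemma chi_mul_sq (d m p : ℕ) (hp : p.Prime) (hm : ¬ p ∣ m) :
    chiP (d * m ^ 2) p = chiP d p := by
  rcases eq_or_ne p 2 with h2 | h2
  · subst h2
    have hm2 : m % 2 = 1 := by omega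
    have hm8 := odd_sq_mod8 m hm2
    have key : (d * m ^ 2) % 8 = d % 8 := by
      rw [Nat.mul_mod, hm8, mul_one]; omega
    unfold chiP
    rw [if_pos rfl, if_pos rfl, key]
  · have hdvd : p ∣ d * m ^ 2 ↔ p ∣ d := by
      constructor
      · intro h
        rcases hp.dvd_mul.mp h with h | h
        · exact h
        · exact absurd (hp.dvd_of_dvd_pow h) hm
      · intro h; exact h.mul_right _
    haveI := Fact.mk hp
    have hmz : (m : ZMod p) ≠ 0 := by
      rw [Ne, ZMod.natCast_eq_zero_iff]; exact hm
    have hQR : (∃ x : ZMod p, x ^ 2 = ((d * m ^ 2 : ℕ) : ZMod p)) ↔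
        ∃ x : ZMod p, x ^ 2 = (d : ZMod p) := by
      push_cast
      constructor
      · rintro ⟨x, hx⟩
        exact ⟨x / m, by field_simp at hx ⊢; linear_combination hx⟩
      · rintro ⟨x, hx⟩
        exact ⟨x * m, by rw [mul_pow, hx]⟩
    unfold chiP
    rw [if_neg h2, if_neg h2]
    split_ifs <;> tauto

lemma Nsq_facts (n : ℕ) (hn : 2 < n) :
    0 < n ^ 2 - 4 ∧ ¬ IsSquare (n ^ 2 - 4) := by
  have h3 : 3 ≤ n := hn
  have hnn : n ^ 2 = n * n := sq n
  have h9 : 9 ≤ n * n := Nat.mul_le_mul h3 h3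
  constructor
  · omega
  · rintro ⟨k, hk⟩
    have hk' : n * n = k * k + 4 := by omega
    have hkn : k < n := by
      by_contra h
      push_neg at h
      have := Nat.mul_le_mul h h
      omega
    have h1 : k + 1 ≤ n := hkn
    have h2 : (k+1) * (k+1) ≤ n * n := Nat.mul_le_mul h1 h1
    have h4 : k ≤ 1 := by nlinarith
    have : k * k ≤ 1 := by nlinarith
    omega

lemma prod_pow_dvd (S : Finset ℕ) (hS : ∀ p ∈ S, p.Prime) (e : ℕ → ℕ) (N : ℕ)
    (h : ∀ p ∈ S, p ^ e p ∣ N) : (∏ p ∈ S, p ^ e p) ∣ N := by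
  induction S using Finset.induction_on with
  | empty => simp
  | @insert q s hq ih =>
    rw [Finset.prod_insert hq]
    have hqp := hS q (Finset.mem_insert_self q s)
    have hcop : Nat.Coprime (q ^ e q) (∏ p ∈ s, p ^ e p) := by
      apply Nat.Coprime.pow_left
      apply Nat.Coprime.prod_right
      intro p hps
      apply Nat.Coprime.pow_right
      exact (Nat.coprime_primes hqp (hS p (Finset.mem_insert_of_mem hps))).mpr
        (fun hqe => hq (hqe ▸ hps))
    exact hcop.mul_dvd_of_dvd_of_dvd (h q (Finset.mem_insert_self q s))
      (ih (fun p hp => hS p (Finset.mem_insert_of_mem hp))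
          (fun p hp => h p (Finset.mem_insert_of_mem hp)))

lemma Icond_lt (p b n : ℕ) (hp : p.Prime) (hn : 2 < n) (h : Icond p b n) :
    b < n ^ 2 - 4 := by
  have hN : 0 < n ^ 2 - 4 := (Nsq_facts n hn).1
  have hle : p ^ (2 * b) ≤ n ^ 2 - 4 := Nat.le_of_dvd hN h.1
  have h2 : 2 ^ (2 * b) ≤ p ^ (2 * b) := Nat.pow_le_pow_left hp.two_le _
  have h3 : b < 2 ^ (2 * b) :=
    lt_of_lt_of_le (Nat.lt_two_pow_self (n := b)) (Nat.pow_le_pow_right (by norm_num) (by omega))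
  omega

lemma sq_mod4 (m : ℕ) (hm : m % 2 = 1) : m ^ 2 % 4 = 1 := by
  obtain ⟨k, hk⟩ : ∃ k, m = 2 * k + 1 := ⟨m / 2, by omega⟩
  subst hk
  have h : (2 * k + 1) ^ 2 = 4 * (k * (k + 1)) + 1 := by ring
  omega

lemma mul_sq_mod4 (d m : ℕ) (hm : m % 2 = 1) : d * m ^ 2 % 4 = d % 4 := by
  rw [Nat.mul_mod, sq_mod4 m hm, mul_one]; omega

lemma div_pow_eq (d m p f N : ℕ) (hp : 0 < p) (h : d * (p ^ f * m) ^ 2 = N) :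
    N / p ^ (2 * f) = d * m ^ 2 := by
  have h2 : N = d * m ^ 2 * p ^ (2 * f) := by
    rw [← h, two_mul, pow_add]; ring
  rw [h2, Nat.mul_div_cancel _ (pow_pos hp _)]

lemma V_factorization (S : Finset ℕ) (hS : ∀ p ∈ S, p.Prime) (e : ℕ → ℕ) (p : ℕ)
    (hp : p ∈ S) : (∏ q ∈ S, q ^ e q).factorization p = e p := by
  rw [Nat.factorization_prod (fun q hq => (pow_pos (hS q hq).pos _).ne')]
  rw [Finset.sum_apply']
  rw [Finset.sum_eq_single_of_mem p hp]
  · rw [(hS p hp).factorization_pow, Finsupp.single_eq_same]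
  · intro q hq hqp
    rw [(hS q hq).factorization_pow, Finsupp.single_eq_of_ne' hqp]

lemma V_eq_self (S : Finset ℕ) (v : ℕ) (hv : v ≠ 0) (hsub : v.primeFactors ⊆ S) :
    ∏ p ∈ S, p ^ v.factorization p = v := by
  conv_rhs => rw [← Nat.factorization_prod_pow_eq_self hv]
  rw [Finsupp.prod]
  symm
  apply Finset.prod_subset
  · rw [Nat.support_factorization]; exact hsub
  · intro p _ hp
    rw [Finsupp.notMem_support_iff.mp hp, pow_zero]

lemma not_dvd_cofactor (S : Finset ℕ) (hS : ∀ p ∈ S, p.Prime) (e : ℕ → ℕ) (p : ℕ)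
    (hpp : p.Prime) : ¬ p ∣ ∏ q ∈ S.erase p, q ^ e q := by
  have hcop : Nat.Coprime p (∏ q ∈ S.erase p, q ^ e q) := by
    apply Nat.Coprime.prod_right
    intro q hq
    apply Nat.Coprime.pow_right
    exact (Nat.coprime_primes hpp (hS q (Finset.mem_of_mem_erase hq))).mpr
      (Ne.symm (Finset.ne_of_mem_erase hq))
  exact (Nat.Prime.coprime_iff_not_dvd hpp).mp hcop

lemma Icond_of_pair (n d v p : ℕ) (hp : p.Prime) (hd4 : d % 4 = 0 ∨ d % 4 = 1)
    (hdv : d * v ^ 2 = n ^ 2 - 4) (hv : 0 < v) : Icond p (v.factorization p) n := by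
  have hvsq : v ^ 2 ∣ n ^ 2 - 4 := Dvd.intro_left d hdv
  constructor
  · have h1 : p ^ v.factorization p ∣ v := Nat.ordProj_dvd v p
    have h2 : (p ^ v.factorization p) ^ 2 ∣ v ^ 2 := pow_dvd_pow_of_dvd h1 2
    have h3 : p ^ (2 * v.factorization p) ∣ v ^ 2 := by
      rw [mul_comm, pow_mul]; exact h2
    exact h3.trans hvsq
  · intro h2
    subst h2
    have hdecomp : 2 ^ v.factorization 2 * (v / 2 ^ v.factorization 2) = v :=
      Nat.ordProj_mul_ordCompl_eq_self v 2
    have hmodd : ¬ 2 ∣ (v / 2 ^ v.factorization 2) :=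
      Nat.not_dvd_ordCompl Nat.prime_two hv.ne'
    have hq := div_pow_eq d (v / 2 ^ v.factorization 2) 2 (v.factorization 2) (n ^ 2 - 4)
      (by norm_num) (by rw [hdecomp]; exact hdv)
    rw [hq, mul_sq_mod4 d _ (by omega)]
    exact hd4

def Vfun (S : Finset ℕ) (g : ∀ a ∈ S, ℕ) : ℕ :=
  ∏ p ∈ S, p ^ (if h : p ∈ S then g p h else 0)

lemma Vfun_pos (S : Finset ℕ) (hS : ∀ p ∈ S, p.Prime) (g : ∀ a ∈ S, ℕ) :
    0 < Vfun S g :=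
  Finset.prod_pos fun p hp => pow_pos (hS p hp).pos _

lemma Vfun_sq_dvd (S : Finset ℕ) (hS : ∀ p ∈ S, p.Prime) (g : ∀ a ∈ S, ℕ) (M : ℕ)
    (h : ∀ p (hp : p ∈ S), p ^ (2 * g p hp) ∣ M) : Vfun S g ^ 2 ∣ M := by
  rw [Vfun, ← Finset.prod_pow]
  have heq : ∀ p ∈ S, (p ^ (if h : p ∈ S then g p h else 0)) ^ 2 =
      p ^ (2 * (if h : p ∈ S then g p h else 0)) := fun p _ => by rw [mul_comm, pow_mul]
  rw [Finset.prod_congr rfl heq]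
  apply prod_pow_dvd S hS _ M
  intro p hp
  rw [dif_pos hp]
  exact h p hp

lemma Vfun_decomp (S : Finset ℕ) (g : ∀ a ∈ S, ℕ) (p : ℕ) (hp : p ∈ S) :
    Vfun S g = p ^ (g p hp) * ∏ q ∈ S.erase p, q ^ (if h : q ∈ S then g q h else 0) := by
  rw [Vfun, ← Finset.mul_prod_erase S _ hp, dif_pos hp]

lemma Vfun_factorization (S : Finset ℕ) (hS : ∀ p ∈ S, p.Prime) (g : ∀ a ∈ S, ℕ)
    (p : ℕ) (hp : p ∈ S) : (Vfun S g).factorization p = g p hp := by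
  rw [Vfun, V_factorization S hS _ p hp, dif_pos hp]

lemma local_quot (S : Finset ℕ) (hS : ∀ p ∈ S, p.Prime) (g : ∀ a ∈ S, ℕ) (M d : ℕ)
    (hd : d * Vfun S g ^ 2 = M) (p : ℕ) (hp : p ∈ S) :
    M / p ^ (2 * g p hp) =
      d * (∏ q ∈ S.erase p, q ^ (if h : q ∈ S then g q h else 0)) ^ 2 ∧
    ¬ p ∣ (∏ q ∈ S.erase p, q ^ (if h : q ∈ S then g q h else 0)) := by
  refine ⟨?_, not_dvd_cofactor S hS _ p (hS p hp)⟩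
  apply div_pow_eq d _ p (g p hp) M (hS p hp).pos
  rw [← Vfun_decomp S g p hp]
  exact hd

/-- For every `P ≥ 2` and every `n > 2`, `β_P(n) = ∏_{p ≤ P} β_{(p)}(n)`. -/
theorem betaP_eq_prod_betaLoc (P : ℝ) (hP : 2 ≤ P) (n : ℕ) (hn : 2 < n) :
    betaPFn P n = ∏ p ∈ primesLe P, betaLoc p n := by
  classical
  obtain ⟨hN, hNsq⟩ := Nsq_facts n hn
  have hSp : ∀ p ∈ primesLe P, p.Prime := fun p hp => (Finset.mem_filter.mp hp).2
  have hSle : ∀ p ∈ primesLe P, (p : ℝ) ≤ P := by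
    intro p hp
    have h1 := Finset.mem_range.mp (Finset.mem_filter.mp hp).1
    have hple : p ≤ ⌊P⌋₊ := by omega
    calc (p:ℝ) ≤ (⌊P⌋₊ : ℝ) := by exact_mod_cast hple
      _ ≤ P := Nat.floor_le (by linarith)
  have h2S : 2 ∈ primesLe P := by
    rw [primesLe, Finset.mem_filter, Finset.mem_range]
    refine ⟨?_, Nat.prime_two⟩
    have : 2 ≤ ⌊P⌋₊ := Nat.le_floor (by exact_mod_cast hP)
    omega
  have hmemS : ∀ q : ℕ, q.Prime → (q:ℝ) ≤ P → q ∈ primesLe P := by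
    intro q hq hqP
    rw [primesLe, Finset.mem_filter, Finset.mem_range]
    have : q ≤ ⌊P⌋₊ := Nat.le_floor hqP
    exact ⟨by omega, hq⟩
  set S := primesLe P with hSdef
  set A : Finset (ℕ × ℕ) := ((n^2-4).divisors ×ˢ (n^2-4).divisors).filter
    (fun dv => IsDisc dv.1 ∧ 0 < dv.2 ∧ dv.1 * dv.2 ^ 2 = n^2-4 ∧
      ∀ p : ℕ, p.Prime → p ∣ dv.2 → (p : ℝ) ≤ P) with hAdef
  -- LHS as a finite sum
  have hLHS : betaPFn P n =
      ∑ dv ∈ A, (1 / dv.2 : ℝ) * ∏ p ∈ S, (1 - (chiFn dv.1 p : ℝ) / p)⁻¹ := by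
    rw [betaPFn, if_pos hn]
    have hset : {dv : ℕ × ℕ | IsDisc dv.1 ∧ 0 < dv.2 ∧ dv.1 * dv.2 ^ 2 = n ^ 2 - 4 ∧
        ∀ p : ℕ, p.Prime → p ∣ dv.2 → (p : ℝ) ≤ P} = (↑A : Set (ℕ × ℕ)) := by
      ext dv
      simp only [hAdef, Set.mem_setOf_eq, Finset.coe_filter, Finset.mem_product,
        Nat.mem_divisors]
      constructor
      · rintro ⟨h1, h2, h3, h4⟩
        refine ⟨⟨⟨⟨dv.2 ^ 2, h3.symm⟩, hN.ne'⟩,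
          dvd_trans (dvd_pow_self dv.2 two_ne_zero) ⟨dv.1, by rw [← h3]; ring⟩, hN.ne'⟩,
          h1, h2, h3, h4⟩
      · rintro ⟨_, h⟩; exact h
    rw [hset, finsum_mem_coe_finset]
  -- betaLoc as a finite sum
  have hloc : ∀ p ∈ S, betaLoc p n = ∑ b ∈ Finset.range (n^2-4),
      (if Icond p b n then
        (1 / (p:ℝ) ^ b) * (1 - (chiFn ((n^2-4) / p ^ (2*b)) p : ℝ) / p)⁻¹ else 0) := by
    intro p hp
    rw [betaLoc, if_pos hn]
    apply tsum_eq_sum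
    intro b hb
    rw [if_neg]
    intro hI
    exact hb (Finset.mem_range.mpr (Icond_lt p b n (hSp p hp) hn hI))
  -- expand the product of sums
  have hprod : ∏ p ∈ S, betaLoc p n =
      ∑ g ∈ S.pi (fun _ => Finset.range (n^2-4)), ∏ x ∈ S.attach,
        (if Icond x.1 (g x.1 x.2) n then
          (1 / (x.1:ℝ) ^ (g x.1 x.2)) *
            (1 - (chiFn ((n^2-4) / x.1 ^ (2*(g x.1 x.2))) x.1 : ℝ) / x.1)⁻¹ else 0) := by
    rw [Finset.prod_congr rfl hloc, Finset.prod_sum]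
  set T : Finset (∀ a ∈ S, ℕ) :=
    (S.pi (fun _ => Finset.range (n^2-4))).filter
      (fun g => ∀ p (hp : p ∈ S), Icond p (g p hp) n) with hTdef
  have hfilter : ∑ g ∈ S.pi (fun _ => Finset.range (n^2-4)), ∏ x ∈ S.attach,
        (if Icond x.1 (g x.1 x.2) n then
          (1 / (x.1:ℝ) ^ (g x.1 x.2)) *
            (1 - (chiFn ((n^2-4) / x.1 ^ (2*(g x.1 x.2))) x.1 : ℝ) / x.1)⁻¹ else 0) =
      ∑ g ∈ T, ∏ x ∈ S.attach,
        (if Icond x.1 (g x.1 x.2) n then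
          (1 / (x.1:ℝ) ^ (g x.1 x.2)) *
            (1 - (chiFn ((n^2-4) / x.1 ^ (2*(g x.1 x.2))) x.1 : ℝ) / x.1)⁻¹ else 0) := by
    rw [hTdef]
    symm
    apply Finset.sum_filter_of_ne
    intro g hg hne
    by_contra hQ
    push_neg at hQ
    obtain ⟨p, hp, hI⟩ := hQ
    exact hne (Finset.prod_eq_zero (Finset.mem_attach _ ⟨p, hp⟩) (if_neg hI))
  have hbij : ∑ g ∈ T, ∏ x ∈ S.attach,
        (if Icond x.1 (g x.1 x.2) n then
          (1 / (x.1:ℝ) ^ (g x.1 x.2)) *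
            (1 - (chiFn ((n^2-4) / x.1 ^ (2*(g x.1 x.2))) x.1 : ℝ) / x.1)⁻¹ else 0) =
      ∑ dv ∈ A, (1 / dv.2 : ℝ) * ∏ p ∈ S, (1 - (chiFn dv.1 p : ℝ) / p)⁻¹ := by
    refine Finset.sum_bij' (fun g _ => ((n^2-4) / Vfun S g ^ 2, Vfun S g))
      (fun dv _ => fun p _ => dv.2.factorization p) ?hi ?hj ?left ?right ?h
    case hi =>
      intro g hg
      obtain ⟨hgpi, hgQ⟩ := Finset.mem_filter.mp hg
      have hdvd : Vfun S g ^ 2 ∣ n^2-4 :=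
        Vfun_sq_dvd S hSp g _ (fun p hp => (hgQ p hp).1)
      have hdmul : ((n^2-4) / Vfun S g ^ 2) * Vfun S g ^ 2 = n^2-4 :=
        Nat.div_mul_cancel hdvd
      have hVpos := Vfun_pos S hSp g
      have hdpos : 0 < (n^2-4) / Vfun S g ^ 2 :=
        Nat.div_pos (Nat.le_of_dvd hN hdvd) (pow_pos hVpos 2)
      have hq2 := local_quot S hSp g (n^2-4) _ hdmul 2 h2S
      have hmod := (hgQ 2 h2S).2 rfl
      rw [hq2.1] at hmod
      have hmodd : (∏ q ∈ S.erase 2, q ^ (if h : q ∈ S then g q h else 0)) % 2 = 1 := by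
        have := hq2.2; omega
      rw [mul_sq_mod4 _ _ hmodd] at hmod
      refine Finset.mem_filter.mpr ⟨Finset.mem_product.mpr
        ⟨Nat.mem_divisors.mpr ⟨⟨Vfun S g ^ 2, hdmul.symm⟩, hN.ne'⟩,
         Nat.mem_divisors.mpr ⟨dvd_trans (dvd_pow_self _ two_ne_zero) hdvd, hN.ne'⟩⟩,
        ⟨hdpos, hmod, ?_⟩, hVpos, hdmul, ?_⟩
      · rintro ⟨k, hk⟩
        dsimp only at hk
        exact hNsq ⟨k * Vfun S g, by rw [← hdmul, hk]; ring⟩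
      · intro q hq hqd
        have hqd' : q ∣ ∏ p ∈ S, p ^ (if h : p ∈ S then g p h else 0) := hqd
        obtain ⟨p, hpS, hqp⟩ := hq.prime.exists_mem_finset_dvd hqd'
        have hqep : q = p :=
          (Nat.prime_dvd_prime_iff_eq hq (hSp p hpS)).mp (hq.prime.dvd_of_dvd_pow hqp)
        exact hqep ▸ hSle p hpS
    case hj =>
      intro dv hdv
      obtain ⟨hmem, hdisc, hvpos, hmul, hsm⟩ := Finset.mem_filter.mp hdv
      refine Finset.mem_filter.mpr ⟨Finset.mem_pi.mpr ?_, ?_⟩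
      · intro p hp
        refine Finset.mem_range.mpr ?_
        have h1 : p ^ dv.2.factorization p ∣ dv.2 := Nat.ordProj_dvd _ _
        have h2 : p ^ dv.2.factorization p ≤ dv.2 := Nat.le_of_dvd hvpos h1
        have h3 : dv.2 ≤ n^2-4 := Nat.le_of_dvd hN
          (dvd_trans (dvd_pow_self _ two_ne_zero) (Dvd.intro_left dv.1 hmul))
        have h4 : dv.2.factorization p < 2 ^ dv.2.factorization p := Nat.lt_two_pow_self
        have h5 : 2 ^ dv.2.factorization p ≤ p ^ dv.2.factorization p :=
          Nat.pow_le_pow_left (hSp p hp).two_le _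
        show dv.2.factorization p < n ^ 2 - 4
        omega
      · intro p hp
        exact Icond_of_pair n dv.1 dv.2 p (hSp p hp) hdisc.2.1 hmul hvpos
    case left =>
      intro g hg
      funext p hp
      exact Vfun_factorization S hSp g p hp
    case right =>
      intro dv hdv
      obtain ⟨hmem, hdisc, hvpos, hmul, hsm⟩ := Finset.mem_filter.mp hdv
      have hV : Vfun S (fun p _ => dv.2.factorization p) = dv.2 := by
        rw [Vfun]
        have hc : ∀ p ∈ S, p ^ (if h : p ∈ S then dv.2.factorization p else 0) =
            p ^ dv.2.factorization p := fun p hp => by rw [dif_pos hp]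
        rw [Finset.prod_congr rfl hc]
        apply V_eq_self S dv.2 hvpos.ne'
        intro q hq
        exact hmemS q (Nat.prime_of_mem_primeFactors hq)
          (hsm q (Nat.prime_of_mem_primeFactors hq) (Nat.dvd_of_mem_primeFactors hq))
      have hd1 : (n^2-4) / dv.2 ^ 2 = dv.1 := by
        rw [← hmul, Nat.mul_div_cancel _ (pow_pos hvpos 2)]
      rw [hV, hd1]
    case h =>
      intro g hg
      dsimp only
      obtain ⟨hgpi, hgQ⟩ := Finset.mem_filter.mp hg
      have hdvd : Vfun S g ^ 2 ∣ n^2-4 :=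
        Vfun_sq_dvd S hSp g _ (fun p hp => (hgQ p hp).1)
      have hdmul : ((n^2-4) / Vfun S g ^ 2) * Vfun S g ^ 2 = n^2-4 :=
        Nat.div_mul_cancel hdvd
      have hVpos := Vfun_pos S hSp g
      have hstep : ∀ x ∈ S.attach,
          (if Icond x.1 (g x.1 x.2) n then
            (1 / (x.1:ℝ) ^ (g x.1 x.2)) *
              (1 - (chiFn ((n^2-4) / x.1 ^ (2*(g x.1 x.2))) x.1 : ℝ) / x.1)⁻¹ else 0) =
          (fun p : ℕ => (1 / (p:ℝ) ^ (if h : p ∈ S then g p h else 0)) *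
            (1 - (chiFn ((n^2-4) / Vfun S g ^ 2) p : ℝ) / p)⁻¹) x.1 := by
        intro x _
        simp only
        rw [if_pos (hgQ x.1 x.2), dif_pos x.2]
        have hq := local_quot S hSp g (n^2-4) _ hdmul x.1 x.2
        rw [hq.1, chiFn_prime _ x.1 (hSp x.1 x.2), chi_mul_sq _ _ x.1 (hSp x.1 x.2) hq.2,
          ← chiFn_prime _ x.1 (hSp x.1 x.2)]
      rw [Finset.prod_congr rfl hstep, Finset.prod_attach S
        (fun p : ℕ => (1 / (p:ℝ) ^ (if h : p ∈ S then g p h else 0)) *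
          (1 - (chiFn ((n^2-4) / Vfun S g ^ 2) p : ℝ) / p)⁻¹)]
      rw [Finset.prod_mul_distrib]
      have hVcast : ∏ p ∈ S, (1 / (p:ℝ) ^ (if h : p ∈ S then g p h else 0)) =
          1 / (Vfun S g : ℝ) := by
        rw [Vfun]
        push_cast
        rw [one_div, ← Finset.prod_inv_distrib]
        simp [one_div]
      rw [hVcast]
  rw [hLHS, hprod, hfilter, hbij]

end
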